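/- Let (G₁,ν¹) and (G₂,ν²) be weighted graphs with controlled weights, and suppose φ:G₁→G₂ is a rough isometry (each graph being viewed as a metric measure space with its graph distance and the measure ν(A)=Σ_{x∈A}ν_x). If (G₁,ν¹) satisfies volume doubling (VD), then (G₂,ν²) satisfies volume doubling (VD). -/

import Mathlib

open scoped Classical ENNReal

noncomputable section

/-- A weighted graph: a countably infinite, locally finite, connected simple graph
with symmetric nonnegative edge weights `nu`, positive exactly on edges. -/
structure WeightedGraph (V : Type*) [Countable V] [Infinite V] where
  G : SimpleGraph V
  connected : G.Connected
  locallyFinite : ∀ x : V, (G.neighborSet x).Finite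
  ball_finite : ∀ (x : V) (r : ℝ), {y : V | (G.dist x y : ℝ) < r}.Finite
  nu : V → V → ℝ
  nu_symm : ∀ x y, nu x y = nu y x
  nu_nonneg : ∀ x y, 0 ≤ nu x y
  nu_pos_iff : ∀ x y, 0 < nu x y ↔ G.Adj x y

namespace WeightedGraph

variable {V : Type*} [Countable V] [Infinite V] (W : WeightedGraph V)

/-- The vertex weight `ν_x = Σ_y ν_{xy}`. -/
def nuV (x : V) : ℝ := ∑ y ∈ (W.locallyFinite x).toFinset, W.nu x y

/-- The ball `B(x,r) = {y : d(x,y) < r}` (with respect to the graph distance),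
as a finite set. -/
def ball (x : V) (r : ℝ) : Finset V := (W.ball_finite x r).toFinset

/-- The volume `V(x,r) = ν(B(x,r))`. -/
def vol (x : V) (r : ℝ) : ℝ := ∑ y ∈ W.ball x r, W.nuV y

/-- `B̄(x,r)`: the ball together with its exterior boundary. -/
def cball (x : V) (r : ℝ) : Set V :=
  (W.ball x r : Set V) ∪ {z : V | ∃ y ∈ W.ball x r, W.G.Adj z y}

/-- `Γ(f,f)(x) = Σ_{y∼x} (f(x)-f(y))² ν_{xy}`. -/
def gamma (f : V → ℝ) (x : V) : ℝ :=
  ∑ y ∈ (W.locallyFinite x).toFinset, (f x - f y) ^ 2 * W.nu x y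

/-- The graph Laplacian `Δf(x) = ν_x⁻¹ Σ_y ν_{xy} (f(y)-f(x))`. -/
def lap (f : V → ℝ) (x : V) : ℝ :=
  (W.nuV x)⁻¹ * ∑ y ∈ (W.locallyFinite x).toFinset, W.nu x y * (f y - f x)

/-- Controlled weights: `ν_{xy} ≥ p₀ ν_x` whenever `x ∼ y`. -/
def ControlledWeights : Prop :=
  ∃ p₀ : ℝ, 0 < p₀ ∧ ∀ x y : V, W.G.Adj x y → p₀ * W.nuV x ≤ W.nu x y

/-- Volume doubling. -/
def VD : Prop :=
  ∃ C : ℝ, 0 < C ∧ ∀ (x : V) (R : ℝ), 0 < R → W.vol x (2 * R) ≤ C * W.vol x R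

/-- The weighted average of `f` over the ball `B(x,R)`. -/
def avg (f : V → ℝ) (x : V) (R : ℝ) : ℝ :=
  (W.vol x R)⁻¹ * ∑ y ∈ W.ball x R, f y * W.nuV y

/-- The Poincaré inequality `PI(Ψ)`. -/
def PI (Psi : ℝ → ℝ) : Prop :=
  ∃ C : ℝ, 0 < C ∧ ∀ (x : V) (R : ℝ), 1 ≤ R → ∀ f : V → ℝ,
    ∑ y ∈ W.ball x R, (f y - W.avg f x R) ^ 2 * W.nuV y ≤
      C * Psi R * ∑ y ∈ W.ball x R, W.gamma f y

/-- The cut-off Sobolev inequality `CS(Ψ)`. -/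
def CS (Psi : ℝ → ℝ) : Prop :=
  ∃ θ : ℝ, θ ∈ Set.Ioc (0 : ℝ) 1 ∧ ∃ c₁ : ℝ, 0 < c₁ ∧ ∃ c₂ : ℝ, 0 < c₂ ∧
    ∀ (x₀ : V) (R : ℝ), 1 ≤ R → ∃ φ : V → ℝ,
      (∀ x ∈ W.ball x₀ (R / 2), 1 ≤ φ x) ∧
      (∀ x, x ∉ W.ball x₀ R → φ x = 0) ∧
      (∀ x y : V, |φ x - φ y| ≤ c₁ * ((W.G.dist x y : ℝ) / R) ^ θ) ∧
      (∀ (x₁ : V) (s : ℝ), 1 ≤ s → s ≤ R → ∀ f : V → ℝ,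
        ∑ x ∈ W.ball x₁ s, (f x) ^ 2 * W.gamma φ x ≤
          c₂ * (s / R) ^ (2 * θ) *
            (∑ x ∈ W.ball x₁ (2 * s), W.gamma f x +
              (Psi s)⁻¹ * ∑ x ∈ W.ball x₁ (2 * s), W.nuV x * (f x) ^ 2))

/-- The parabolic Harnack inequality `PHI(Ψ)`. -/
def PHI (Psi : ℝ → ℝ) : Prop :=
  ∃ C : ℝ, 0 < C ∧ ∀ (x₀ : V) (R : ℝ), 1 ≤ R →
    ∀ u : ℝ → V → ℝ,
      (∀ t ∈ Set.Ioo (0 : ℝ) (4 * Psi R), ∀ x ∈ W.cball x₀ (2 * R), 0 ≤ u t x) →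
      (∀ x ∈ W.ball x₀ (2 * R), ∀ t ∈ Set.Ioo (0 : ℝ) (4 * Psi R),
        HasDerivAt (fun s : ℝ => u s x) (W.lap (u t) x) t) →
      ∀ t₁ ∈ Set.Ioo (Psi R) (2 * Psi R), ∀ x₁ ∈ W.ball x₀ R,
        ∀ t₂ ∈ Set.Ioo (3 * Psi R) (4 * Psi R), ∀ x₂ ∈ W.ball x₀ R,
          u t₁ x₁ ≤ C * u t₂ x₂

/-- The elliptic Harnack inequality `EHI`. -/
def EHI : Prop :=
  ∃ C : ℝ, 0 < C ∧ ∀ (x : V) (R : ℝ), 1 ≤ R → ∀ u : V → ℝ,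
    (∀ y ∈ W.cball x R, 0 ≤ u y) →
    (∀ y ∈ W.ball x R, W.lap u y = 0) →
    ∀ y₁ ∈ W.ball x (R / 2), ∀ y₂ ∈ W.ball x (R / 2), u y₁ ≤ C * u y₂

/-- The energy `(1/2) Σ_x Σ_y (f(x)-f(y))² ν_{xy}`, as an extended real. -/
def energy (f : V → ℝ) : ℝ≥0∞ :=
  (1 / 2 : ℝ≥0∞) * ∑' x : V, ∑' y : V, ENNReal.ofReal ((f x - f y) ^ 2 * W.nu x y)

/-- The inverse of the effective resistance between `A` and `B`. -/
def resInv (A B : Set V) : ℝ≥0∞ :=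
  ⨅ f ∈ {f : V → ℝ | (∀ x ∈ A, f x = 1) ∧ (∀ x ∈ B, f x = 0)}, W.energy f

/-- The effective resistance between `A` and `B`. -/
def reff (A B : Set V) : ℝ≥0∞ := (W.resInv A B)⁻¹

/-- The resistance estimate `RES(Ψ)`. -/
def RES (Psi : ℝ → ℝ) : Prop :=
  ∃ c₁ c₂ : ℝ, 0 < c₁ ∧ 0 < c₂ ∧ ∀ (x : V) (R : ℝ), 1 ≤ R →
    ENNReal.ofReal (c₁ * Psi R / W.vol x R) ≤
        W.reff (W.ball x R : Set V) ((W.ball x (2 * R) : Set V)ᶜ) ∧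
      W.reff (W.ball x R : Set V) ((W.ball x (2 * R) : Set V)ᶜ) ≤
        ENNReal.ofReal (c₂ * Psi R / W.vol x R)

/-- The heat kernel `p_t(x,y) = (exp(tΔ) 1_{y})(x) / ν_y`, where the operator
exponential is given by its (entrywise absolutely convergent) power series. -/
def heatKernel (t : ℝ) (x y : V) : ℝ :=
  (∑' n : ℕ, t ^ n / (n.factorial : ℝ) *
      (W.lap^[n] (fun z : V => if z = y then (1 : ℝ) else 0)) x) / W.nuV y

/-- The two-sided sub-Gaussian heat kernel estimate `HK(Ψ)` with `Ψ(R) = R^β`. -/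
def HK (β : ℝ) : Prop :=
  ∃ c₁ c₂ c₃ c₄ : ℝ, 0 < c₁ ∧ 0 < c₂ ∧ 0 < c₃ ∧ 0 < c₄ ∧
    ∀ (x y : V) (t : ℝ), max 1 (W.G.dist x y : ℝ) ≤ t →
      c₁ * Real.exp (-(((c₂ * (W.G.dist x y : ℝ)) ^ β / t) ^ (1 / (β - 1)))) /
          W.vol x (t ^ (1 / β)) ≤ W.heatKernel t x y ∧
        W.heatKernel t x y ≤
          c₃ * Real.exp (-(((c₄ * (W.G.dist x y : ℝ)) ^ β / t) ^ (1 / (β - 1)))) /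
            W.vol x (t ^ (1 / β))

end WeightedGraph

/-- A rough isometry between weighted graphs, viewed as metric measure spaces with
the graph distance and the measure `ν`. -/
def GraphRoughIsometry {V₁ V₂ : Type*} [Countable V₁] [Infinite V₁]
    [Countable V₂] [Infinite V₂]
    (W₁ : WeightedGraph V₁) (W₂ : WeightedGraph V₂) (φ : V₁ → V₂) : Prop :=
  ∃ C₁ C₂ C₃ : ℝ, 0 < C₁ ∧ 1 < C₂ ∧ 1 < C₃ ∧
    (∀ w : V₂, ∃ x : V₁, (W₂.G.dist (φ x) w : ℝ) < C₁) ∧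
    (∀ x y : V₁,
      C₂⁻¹ * ((W₁.G.dist x y : ℝ) - C₁) ≤ (W₂.G.dist (φ x) (φ y) : ℝ) ∧
        (W₂.G.dist (φ x) (φ y) : ℝ) ≤ C₂ * ((W₁.G.dist x y : ℝ) + C₁)) ∧
    (∀ x : V₁,
      C₃⁻¹ * W₁.vol x C₁ ≤ W₂.vol (φ x) C₁ ∧ W₂.vol (φ x) C₁ ≤ C₃ * W₁.vol x C₁)

end
open scoped Classical
open Finset

namespace WeightedGraph

variable {V : Type*} [Countable V] [Infinite V] (W : WeightedGraph V)

lemma mem_ball_iff {x y : V} {r : ℝ} : y ∈ W.ball x r ↔ (W.G.dist x y : ℝ) < r := by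
  simp [ball]

lemma ball_mono {x : V} {r r' : ℝ} (h : r ≤ r') : W.ball x r ⊆ W.ball x r' := by
  intro y hy
  rw [mem_ball_iff] at hy ⊢
  linarith

lemma self_mem_ball {x : V} {r : ℝ} (h : 0 < r) : x ∈ W.ball x r := by
  rw [mem_ball_iff, SimpleGraph.dist_self]
  simpa using h

lemma nuV_nonneg (x : V) : 0 ≤ W.nuV x :=
  Finset.sum_nonneg fun y _ => W.nu_nonneg x y

lemma vol_nonneg (x : V) (r : ℝ) : 0 ≤ W.vol x r :=
  Finset.sum_nonneg fun y _ => W.nuV_nonneg y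

lemma vol_mono (x : V) {r r' : ℝ} (h : r ≤ r') : W.vol x r ≤ W.vol x r' :=
  Finset.sum_le_sum_of_subset_of_nonneg (W.ball_mono h) fun y _ _ => W.nuV_nonneg y

lemma exists_adj (x : V) : ∃ y, W.G.Adj x y := by
  obtain ⟨y, hy⟩ := exists_ne x
  obtain ⟨p⟩ := (W.connected y x).symm
  cases p with
  | nil => exact absurd rfl hy.symm
  | cons h q => exact ⟨_, h⟩

lemma mem_nbhd_iff {x y : V} : y ∈ (W.locallyFinite x).toFinset ↔ W.G.Adj x y := by
  simp [SimpleGraph.neighborSet]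

lemma nu_le_nuV {x y : V} (h : W.G.Adj x y) : W.nu x y ≤ W.nuV x :=
  Finset.single_le_sum (fun z _ => W.nu_nonneg x z) (W.mem_nbhd_iff.2 h)

lemma nuV_pos (x : V) : 0 < W.nuV x := by
  obtain ⟨y, hy⟩ := W.exists_adj x
  exact lt_of_lt_of_le ((W.nu_pos_iff x y).2 hy) (W.nu_le_nuV hy)

lemma nuV_le_vol {x : V} {r : ℝ} (h : 0 < r) : W.nuV x ≤ W.vol x r :=
  Finset.single_le_sum (fun z _ => W.nuV_nonneg z) (W.self_mem_ball h)

end WeightedGraph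
namespace WeightedGraph

variable {V : Type*} [Countable V] [Infinite V] (W : WeightedGraph V)
variable {p₀ : ℝ} (hp : 0 < p₀) (hcw : ∀ x y : V, W.G.Adj x y → p₀ * W.nuV x ≤ W.nu x y)

include hp hcw

lemma p0_le_one : p₀ ≤ 1 := by
  obtain ⟨y, hy⟩ := W.exists_adj (Classical.arbitrary V)
  have h1 := (hcw _ _ hy).trans (W.nu_le_nuV hy)
  have h2 := W.nuV_pos (Classical.arbitrary V)
  nlinarith

lemma adj_nuV_le {x y : V} (h : W.G.Adj x y) : p₀ * W.nuV x ≤ W.nuV y := by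
  have := (hcw x y h).trans ((W.nu_symm x y).le.trans (W.nu_le_nuV h.symm))
  exact this

lemma walk_nuV {x y : V} (p : W.G.Walk x y) : p₀ ^ p.length * W.nuV x ≤ W.nuV y := by
  induction p with
  | nil => simp
  | @cons u v w h q ih =>
      have h1 : p₀ * W.nuV u ≤ W.nuV v := W.adj_nuV_le hp hcw h
      have h2 : p₀ ^ q.length * W.nuV v ≤ W.nuV w := ih
      calc p₀ ^ (SimpleGraph.Walk.cons h q).length * W.nuV u
          = p₀ ^ q.length * (p₀ * W.nuV u) := by
            rw [SimpleGraph.Walk.length_cons]; ring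
        _ ≤ p₀ ^ q.length * W.nuV v := by
            exact mul_le_mul_of_nonneg_left h1 (pow_nonneg hp.le _)
        _ ≤ W.nuV w := h2

lemma dist_nuV {x y : V} {n : ℕ} (h : W.G.dist x y ≤ n) :
    p₀ ^ n * W.nuV x ≤ W.nuV y := by
  obtain ⟨p, hpl⟩ := W.connected.exists_walk_length_eq_dist x y
  refine le_trans ?_ (W.walk_nuV hp hcw p)
  have : p₀ ^ n ≤ p₀ ^ p.length := by
    apply pow_le_pow_of_le_one hp.le (W.p0_le_one hp hcw)
    omega
  exact mul_le_mul_of_nonneg_right this (W.nuV_nonneg x)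

lemma sum_nbhd_le (z : V) :
    ∑ y ∈ (W.locallyFinite z).toFinset, W.nuV y ≤ p₀⁻¹ * W.nuV z := by
  have h1 : ∀ y ∈ (W.locallyFinite z).toFinset, W.nuV y ≤ p₀⁻¹ * W.nu z y := by
    intro y hy
    have hadj : W.G.Adj z y := W.mem_nbhd_iff.1 hy
    have := hcw y z hadj.symm
    have h2 := (this.trans (W.nu_symm y z).le)
    rw [le_inv_mul_iff₀ hp]  -- maybe different name
    linarith [W.nuV_nonneg y]
  calc ∑ y ∈ (W.locallyFinite z).toFinset, W.nuV y
      ≤ ∑ y ∈ (W.locallyFinite z).toFinset, p₀⁻¹ * W.nu z y := Finset.sum_le_sum h1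
    _ = p₀⁻¹ * W.nuV z := by rw [← Finset.mul_sum]; rfl

end WeightedGraph
set_option linter.unusedSectionVars false

namespace WeightedGraph

variable {V : Type*} [Countable V] [Infinite V] (W : WeightedGraph V)
variable {p₀ : ℝ} (hp : 0 < p₀) (hcw : ∀ x y : V, W.G.Adj x y → p₀ * W.nuV x ≤ W.nu x y)

/-- Sum over a biUnion vs double sum, via exact multiplicity count. -/
lemma sum_biUnion_eq {α β : Type*} [DecidableEq α] [DecidableEq β]
    (S : Finset α) (f : α → Finset β) (g : β → ℝ) :
    ∑ a ∈ S, ∑ b ∈ f a, g b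
      = ∑ b ∈ S.biUnion f, ((S.filter (fun a => b ∈ f a)).card : ℝ) * g b := by
  have h1 : ∀ a ∈ S, ∑ b ∈ f a, g b = ∑ b ∈ S.biUnion f, if b ∈ f a then g b else 0 := by
    intro a ha
    rw [← Finset.sum_filter]
    congr 1
    ext b
    simp only [Finset.mem_filter, Finset.mem_biUnion]
    exact ⟨fun hb => ⟨⟨a, ha, hb⟩, hb⟩, fun hb => hb.2⟩
  rw [Finset.sum_congr rfl h1, Finset.sum_comm]
  refine Finset.sum_congr rfl fun b _ => ?_
  rw [Finset.sum_ite, Finset.sum_const, Finset.sum_const_zero, add_zero, nsmul_eq_mul]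

lemma ball_one (x : V) : W.ball x 1 = {x} := by
  ext y
  rw [mem_ball_iff, Finset.mem_singleton]
  constructor
  · intro h
    have : W.G.dist x y = 0 := by exact_mod_cast Nat.lt_one_iff.1 (by exact_mod_cast h)
    exact ((W.connected.dist_eq_zero_iff).1 this).symm
  · rintro rfl
    simp [SimpleGraph.dist_self]

include hp hcw

lemma vol_nat_le (x : V) (n : ℕ) : W.vol x ((n : ℝ) + 1) ≤ (1 + p₀⁻¹) ^ n * W.nuV x := by
  induction n with
  | zero => simp [vol, W.ball_one]
  | succ n ih =>
      set cl : V → Finset V := fun z => insert z (W.locallyFinite z).toFinset with hcl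
      have hcov : W.ball x ((n : ℝ) + 1 + 1) ⊆ (W.ball x ((n : ℝ) + 1)).biUnion cl := by
        intro y hy
        rw [mem_ball_iff] at hy
        have hdn : W.G.dist x y ≤ n + 1 := by exact_mod_cast Nat.lt_succ_iff.1 (by exact_mod_cast
          (by push_cast at hy ⊢; exact_mod_cast hy : (W.G.dist x y : ℝ) < ((n : ℝ) + 2)))
        rcases Nat.lt_or_ge (W.G.dist x y) (n + 1) with hlt | hge
        · refine Finset.mem_biUnion.2 ⟨y, ?_, by simp [hcl]⟩
          rw [mem_ball_iff]
          push_cast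
          exact_mod_cast (by exact_mod_cast hlt : (W.G.dist x y : ℝ) < (n : ℝ) + 1)
        · have hd : W.G.dist x y = n + 1 := le_antisymm hdn hge
          have hne : y ≠ x := by
            intro h; subst h; rw [SimpleGraph.dist_self] at hd; omega
          obtain ⟨p, hpl⟩ := W.connected.exists_walk_length_eq_dist y x
          cases p with
          | nil => exact absurd rfl hne
          | @cons _ z _ h q =>
              have hqz : W.G.dist x z ≤ n := by
                have hxz := SimpleGraph.dist_le q.reverse
                rw [SimpleGraph.Walk.length_reverse] at hxz
                have hql : q.length + 1 = W.G.dist y x := by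
                  rw [← hpl, SimpleGraph.Walk.length_cons]
                have hcomm : W.G.dist y x = W.G.dist x y := SimpleGraph.dist_comm
                omega
              refine Finset.mem_biUnion.2 ⟨z, ?_, ?_⟩
              · rw [mem_ball_iff]
                have : (W.G.dist x z : ℝ) ≤ (n : ℝ) := by exact_mod_cast hqz
                linarith
              · simp only [hcl, Finset.mem_insert, mem_nbhd_iff]
                exact Or.inr h.symm
      have h2 : W.vol x ((n : ℝ) + 1 + 1) ≤ ∑ z ∈ W.ball x ((n : ℝ) + 1), ∑ y ∈ cl z, W.nuV y := by
        rw [sum_biUnion_eq]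
        refine le_trans (Finset.sum_le_sum_of_subset_of_nonneg hcov fun y _ _ => W.nuV_nonneg y) ?_
        refine Finset.sum_le_sum fun b hb => ?_
        have hpos : 0 < (Finset.filter (fun a => b ∈ cl a) (W.ball x ((n:ℝ)+1))).card := by
          rw [Finset.card_pos]
          obtain ⟨a, ha, hba⟩ := Finset.mem_biUnion.1 hb
          exact ⟨a, Finset.mem_filter.2 ⟨ha, hba⟩⟩
        have h1le : (1:ℝ) ≤ ((Finset.filter (fun a => b ∈ cl a) (W.ball x ((n:ℝ)+1))).card : ℝ) := by
          exact_mod_cast hpos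
        nlinarith [W.nuV_nonneg b]
      have h3 : ∀ z ∈ W.ball x ((n : ℝ) + 1), ∑ y ∈ cl z, W.nuV y ≤ (1 + p₀⁻¹) * W.nuV z := by
        intro z _
        have hz : z ∉ (W.locallyFinite z).toFinset := by
          simp [mem_nbhd_iff]
        rw [hcl, Finset.sum_insert hz]
        have := W.sum_nbhd_le hp hcw z
        linarith
      have h4 : (0:ℝ) ≤ 1 + p₀⁻¹ := by positivity
      push_cast
      calc W.vol x ((n : ℝ) + 1 + 1) ≤ ∑ z ∈ W.ball x ((n : ℝ) + 1), ∑ y ∈ cl z, W.nuV y := h2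
        _ ≤ ∑ z ∈ W.ball x ((n : ℝ) + 1), (1 + p₀⁻¹) * W.nuV z := Finset.sum_le_sum h3
        _ = (1 + p₀⁻¹) * W.vol x ((n : ℝ) + 1) := by rw [← Finset.mul_sum]; rfl
        _ ≤ (1 + p₀⁻¹) * ((1 + p₀⁻¹) ^ n * W.nuV x) := by
            exact mul_le_mul_of_nonneg_left ih h4
        _ = (1 + p₀⁻¹) ^ (n + 1) * W.nuV x := by ring

lemma vol_le_nuV (x : V) {r : ℝ} {n : ℕ} (h : r ≤ (n : ℝ) + 1) :
    W.vol x r ≤ (1 + p₀⁻¹) ^ n * W.nuV x :=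
  (W.vol_mono x h).trans (W.vol_nat_le hp hcw x n)

lemma card_ball_le (x : V) {r : ℝ} {n : ℕ} (hrn : r ≤ (n : ℝ)) :
    ((W.ball x r).card : ℝ) ≤ ((1 + p₀⁻¹) * p₀⁻¹) ^ n := by
  have hb : ∀ y ∈ W.ball x r, p₀ ^ n * W.nuV x ≤ W.nuV y := by
    intro y hy
    rw [mem_ball_iff] at hy
    refine W.dist_nuV hp hcw ?_
    exact_mod_cast (hy.trans_le hrn).le
  have h1 : ((W.ball x r).card : ℝ) * (p₀ ^ n * W.nuV x) ≤ W.vol x r := by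
    rw [← nsmul_eq_mul]
    exact Finset.card_nsmul_le_sum _ _ _ hb
  have h2 : W.vol x r ≤ (1 + p₀⁻¹) ^ n * W.nuV x :=
    W.vol_le_nuV hp hcw x (hrn.trans (by linarith))
  have h3 : 0 < W.nuV x := W.nuV_pos x
  have h4 : 0 < p₀ ^ n := pow_pos hp n
  have h5 : ((W.ball x r).card : ℝ) * p₀ ^ n ≤ (1 + p₀⁻¹) ^ n := by
    rw [← mul_le_mul_iff_of_pos_right h3]
    nlinarith
  have h6 : ((1 + p₀⁻¹) * p₀⁻¹) ^ n = (1 + p₀⁻¹) ^ n / p₀ ^ n := by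
    rw [mul_pow]
    field_simp
    rw [← mul_pow, one_div, inv_mul_cancel₀ hp.ne', one_pow]
  rw [h6, le_div_iff₀ h4]
  exact h5


end WeightedGraph
namespace WeightedGraph

variable {V : Type*} [Countable V] [Infinite V] (W : WeightedGraph V)

lemma sum_biUnion_le' {α β : Type*} [DecidableEq α] [DecidableEq β]
    (S : Finset α) (f : α → Finset β) (g : β → ℝ) (hg : ∀ b, 0 ≤ g b) :
    ∑ b ∈ S.biUnion f, g b ≤ ∑ a ∈ S, ∑ b ∈ f a, g b := by
  rw [sum_biUnion_eq]
  refine Finset.sum_le_sum fun b hb => ?_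
  have hpos : 0 < (S.filter (fun a => b ∈ f a)).card := by
    rw [Finset.card_pos]
    obtain ⟨a, ha, hba⟩ := Finset.mem_biUnion.1 hb
    exact ⟨a, Finset.mem_filter.2 ⟨ha, hba⟩⟩
  have h1 : (1:ℝ) ≤ ((S.filter (fun a => b ∈ f a)).card : ℝ) := by exact_mod_cast hpos
  nlinarith [hg b]

lemma sum_le_mul_biUnion {α β : Type*} [DecidableEq α] [DecidableEq β]
    (S : Finset α) (f : α → Finset β) (g : β → ℝ) (hg : ∀ b, 0 ≤ g b) {N : ℝ}
    (hN : ∀ b ∈ S.biUnion f, ((S.filter (fun a => b ∈ f a)).card : ℝ) ≤ N) :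
    ∑ a ∈ S, ∑ b ∈ f a, g b ≤ N * ∑ b ∈ S.biUnion f, g b := by
  rw [sum_biUnion_eq, Finset.mul_sum]
  exact Finset.sum_le_sum fun b hb =>
    mul_le_mul_of_nonneg_right (hN b hb) (hg b)

lemma vd_iter {C : ℝ} (hC1 : 1 ≤ C)
    (h : ∀ (x : V) (R : ℝ), 0 < R → W.vol x (2*R) ≤ C * W.vol x R) (k : ℕ) :
    ∀ (x : V) (R : ℝ), 0 < R → W.vol x (2^k * R) ≤ C^k * W.vol x R := by
  induction k with
  | zero => intro x R _; simp
  | succ k ih =>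
      intro x R hR
      have h1 : (2:ℝ)^(k+1) * R = 2^k * (2*R) := by ring
      calc W.vol x (2^(k+1)*R) = W.vol x (2^k * (2*R)) := by rw [h1]
        _ ≤ C^k * W.vol x (2*R) := ih x (2*R) (by linarith)
        _ ≤ C^k * (C * W.vol x R) :=
            mul_le_mul_of_nonneg_left (h x R hR) (pow_nonneg (by linarith) k)
        _ = C^(k+1) * W.vol x R := by ring

end WeightedGraph

set_option maxHeartbeats 1000000 in
/-- Volume doubling is stable under rough isometries of weighted graphs with
controlled weights. -/
theorem vd_stable_under_rough_isometry {V₁ V₂ : Type*}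
    [Countable V₁] [Infinite V₁] [Countable V₂] [Infinite V₂]
    (W₁ : WeightedGraph V₁) (W₂ : WeightedGraph V₂)
    (hcw₁ : W₁.ControlledWeights) (hcw₂ : W₂.ControlledWeights)
    (φ : V₁ → V₂) (hφ : GraphRoughIsometry W₁ W₂ φ)
    (hVD : W₁.VD) : W₂.VD := by
  classical
  obtain ⟨p₀, hp₀, hcw1⟩ := hcw₁
  obtain ⟨q₀, hq₀, hcw2⟩ := hcw₂
  obtain ⟨C₁, C₂, C₃, hC₁, hC₂, hC₃, hsur, hdist, hvol⟩ := hφ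
  obtain ⟨C, hCpos, hVD⟩ := hVD
  have hC₂0 : (0:ℝ) < C₂ := by linarith
  have hC₃0 : (0:ℝ) < C₃ := by linarith
  have tri₂ : ∀ a b c : V₂, (W₂.G.dist a c : ℝ) ≤ W₂.G.dist a b + W₂.G.dist b c := by
    intro a b c; exact_mod_cast W₂.connected.dist_triangle
  have dcomm₂ : ∀ a b : V₂, (W₂.G.dist a b : ℝ) = (W₂.G.dist b a : ℝ) := by
    intro a b
    exact_mod_cast (SimpleGraph.dist_comm : W₂.G.dist a b = W₂.G.dist b a)
  have dcomm₁ : ∀ a b : V₁, (W₁.G.dist a b : ℝ) = (W₁.G.dist b a : ℝ) := by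
    intro a b
    exact_mod_cast (SimpleGraph.dist_comm : W₁.G.dist a b = W₁.G.dist b a)
  set C' : ℝ := max C 1 with hC'def
  have hC'1 : 1 ≤ C' := le_max_right _ _
  have hVD' : ∀ (x : V₁) (R : ℝ), 0 < R → W₁.vol x (2*R) ≤ C' * W₁.vol x R := by
    intro x R hR
    exact (hVD x R hR).trans
      (mul_le_mul_of_nonneg_right (le_max_left _ _) (W₁.vol_nonneg x R))
  set c₁ : ℝ := (1+p₀⁻¹)^(⌈C₁⌉₊) with hc₁def
  have hc₁0 : 0 < c₁ := by positivity
  have hvolC₁ : ∀ x : V₁, W₁.vol x C₁ ≤ c₁ * W₁.nuV x := by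
    intro x
    exact W₁.vol_le_nuV hp₀ hcw1 x ((Nat.le_ceil C₁).trans (by linarith))
  set D : ℝ := 2*C₂*C₁ + C₁ + 1 with hDdef
  set N : ℝ := ((1+p₀⁻¹)*p₀⁻¹)^(⌈D⌉₊) with hNdef
  have hN0 : 0 < N := by positivity
  have hcard : ∀ x : V₁, ((W₁.ball x D).card : ℝ) ≤ N := by
    intro x
    exact W₁.card_ball_le hp₀ hcw1 x (Nat.le_ceil D)
  set a : ℝ := 2*C₂ + 2*C₂*C₁ + C₁ + 1 with hadef
  have ha0 : 0 < a := by nlinarith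
  set b : ℝ := 2*C₂*a with hbdef
  obtain ⟨k, hk⟩ := pow_unbounded_of_one_lt b (one_lt_two (α := ℝ))
  set R₀ : ℝ := 4*C₁ + 2*C₁*C₂ + 2*C₂ + 1 with hR₀def
  set Cs : ℝ := (1+q₀⁻¹)^(⌈2*R₀⌉₊) with hCsdef
  have hCs0 : 0 < Cs := by positivity
  set Cb : ℝ := C₃ * c₁ * C'^k * (C₃ * N) with hCbdef
  refine ⟨max Cs Cb, lt_of_lt_of_le hCs0 (le_max_left _ _), ?_⟩
  intro w R hR
  rcases le_or_gt R R₀ with hsmall | hbig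
  · -- small radii: controlled weights in W₂ suffice
    have hR₀0 : 0 < R₀ := lt_of_lt_of_le hR hsmall
    have h1 : W₂.vol w (2*R) ≤ W₂.vol w (2*R₀) := W₂.vol_mono w (by linarith)
    have h2 : W₂.vol w (2*R₀) ≤ Cs * W₂.nuV w :=
      W₂.vol_le_nuV hq₀ hcw2 w ((Nat.le_ceil (2*R₀)).trans (by linarith))
    have h3 : W₂.nuV w ≤ W₂.vol w R := W₂.nuV_le_vol hR
    calc W₂.vol w (2*R) ≤ Cs * W₂.nuV w := h1.trans h2
      _ ≤ Cs * W₂.vol w R := mul_le_mul_of_nonneg_left h3 hCs0.le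
      _ ≤ max Cs Cb * W₂.vol w R :=
          mul_le_mul_of_nonneg_right (le_max_left _ _) (W₂.vol_nonneg w R)
  · -- large radii: transfer through the rough isometry
    have hR1 : 1 ≤ R := by nlinarith
    set l : ℝ := (R - 2*C₁)/C₂ - C₁ with hldef
    have hlC : l * C₂ = R - 2*C₁ - C₁*C₂ := by
      rw [hldef]
      field_simp
    have hl2 : R/(2*C₂) ≤ l := by
      rw [div_le_iff₀ (by positivity)]
      nlinarith [hlC, mul_pos hC₁ hC₂0]
    have hl1 : 1 ≤ l := by
      refine le_trans ?_ hl2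
      rw [le_div_iff₀ (by positivity)]
      nlinarith [mul_pos hC₁ hC₂0]
    have hl0 : 0 < l := by linarith
    obtain ⟨x₀, hx₀⟩ := hsur w
    set L : ℝ := C₂*(2*R+2*C₁)+C₁+1 with hLdef
    -- upper bound: cover B₂(w,2R) by images of points of B₁(x₀,L)
    have hcov : W₂.ball w (2*R) ⊆ (W₁.ball x₀ L).biUnion (fun x => W₂.ball (φ x) C₁) := by
      intro z hz
      rw [W₂.mem_ball_iff] at hz
      obtain ⟨x, hxz⟩ := hsur z
      refine Finset.mem_biUnion.2 ⟨x, ?_, W₂.mem_ball_iff.2 hxz⟩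
      rw [W₁.mem_ball_iff, dcomm₁]
      have t1 : (W₂.G.dist (φ x) (φ x₀) : ℝ) ≤
          (W₂.G.dist (φ x) z : ℝ) + ((W₂.G.dist z w : ℝ) + (W₂.G.dist w (φ x₀) : ℝ)) := by
        refine le_trans (tri₂ _ z _) ?_
        have := tri₂ z w (φ x₀)
        linarith
      rw [dcomm₂ z w, dcomm₂ w (φ x₀)] at t1
      have t2 : (W₂.G.dist (φ x) (φ x₀) : ℝ) < 2*R + 2*C₁ := by linarith
      have t3 := (hdist x x₀).1
      have t4 : (W₁.G.dist x x₀ : ℝ) - C₁ ≤ C₂ * (W₂.G.dist (φ x) (φ x₀) : ℝ) := by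
        have h := mul_le_mul_of_nonneg_left t3 hC₂0.le
        rwa [← mul_assoc, mul_inv_cancel₀ (ne_of_gt hC₂0), one_mul] at h
      have t5 := mul_lt_mul_of_pos_left t2 hC₂0
      rw [hLdef]
      linarith
    have hup1 : W₂.vol w (2*R) ≤ ∑ x ∈ W₁.ball x₀ L, W₂.vol (φ x) C₁ := by
      refine le_trans (Finset.sum_le_sum_of_subset_of_nonneg hcov
        fun y _ _ => W₂.nuV_nonneg y) ?_
      exact WeightedGraph.sum_biUnion_le' _ _ _ (fun z => W₂.nuV_nonneg z)
    have hup2 : ∑ x ∈ W₁.ball x₀ L, W₂.vol (φ x) C₁ ≤ C₃ * c₁ * W₁.vol x₀ L := by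
      have h1 : ∀ x ∈ W₁.ball x₀ L, W₂.vol (φ x) C₁ ≤ C₃ * c₁ * W₁.nuV x := by
        intro x _
        calc W₂.vol (φ x) C₁ ≤ C₃ * W₁.vol x C₁ := (hvol x).2
          _ ≤ C₃ * (c₁ * W₁.nuV x) := mul_le_mul_of_nonneg_left (hvolC₁ x) hC₃0.le
          _ = C₃ * c₁ * W₁.nuV x := by ring
      calc ∑ x ∈ W₁.ball x₀ L, W₂.vol (φ x) C₁
          ≤ ∑ x ∈ W₁.ball x₀ L, C₃ * c₁ * W₁.nuV x := Finset.sum_le_sum h1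
        _ = C₃ * c₁ * W₁.vol x₀ L := by rw [← Finset.mul_sum]; rfl
    -- comparison of the two radii in W₁ using VD
    have hL2k : L ≤ 2^k * l := by
      have h1 : L ≤ a * R := by
        rw [hLdef, hadef]
        nlinarith [mul_nonneg (mul_nonneg hC₂0.le hC₁.le) (sub_nonneg.2 hR1),
          mul_nonneg hC₁.le (sub_nonneg.2 hR1)]
      have h2 : a * R = b * (R/(2*C₂)) := by
        rw [hbdef]
        field_simp
      have hb0 : 0 < b := by positivity
      have h3 : b * (R/(2*C₂)) ≤ b * l := mul_le_mul_of_nonneg_left hl2 hb0.le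
      have h4 : b * l ≤ 2^k * l := mul_le_mul_of_nonneg_right hk.le hl0.le
      calc L ≤ a * R := h1
        _ = b * (R/(2*C₂)) := h2
        _ ≤ b * l := h3
        _ ≤ 2^k * l := h4
    have hCiter : W₁.vol x₀ L ≤ C'^k * W₁.vol x₀ l :=
      (W₁.vol_mono x₀ hL2k).trans (W₁.vd_iter hC'1 hVD' k x₀ l hl0)
    -- lower bound: images of points of B₁(x₀,l) land in B₂(w,R), bounded multiplicity
    set S := W₁.ball x₀ l with hSdef
    set T := S.biUnion (fun x => W₂.ball (φ x) C₁) with hTdef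
    have hTsub : T ⊆ W₂.ball w R := by
      intro z hz
      obtain ⟨x, hxS, hxz⟩ := Finset.mem_biUnion.1 hz
      rw [W₂.mem_ball_iff] at hxz ⊢
      rw [hSdef, W₁.mem_ball_iff] at hxS
      have t1 : (W₂.G.dist w z : ℝ) ≤
          (W₂.G.dist w (φ x₀) : ℝ) + ((W₂.G.dist (φ x₀) (φ x) : ℝ) + (W₂.G.dist (φ x) z : ℝ)) := by
        refine le_trans (tri₂ _ (φ x₀) _) ?_
        have := tri₂ (φ x₀) (φ x) z
        linarith
      rw [dcomm₂ w (φ x₀)] at t1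
      have t2 := (hdist x₀ x).2
      have t3 : C₂ * ((W₁.G.dist x₀ x : ℝ) + C₁) < C₂ * (l + C₁) :=
        mul_lt_mul_of_pos_left (by linarith) hC₂0
      nlinarith [hlC]
    have hmult : ∀ z ∈ T, ((S.filter (fun x => z ∈ W₂.ball (φ x) C₁)).card : ℝ) ≤ N := by
      intro z hz
      obtain ⟨x', hx'S, hx'z⟩ := Finset.mem_biUnion.1 hz
      have hsubF : S.filter (fun x => z ∈ W₂.ball (φ x) C₁) ⊆ W₁.ball x' D := by
        intro x hx
        obtain ⟨hxS, hxz⟩ := Finset.mem_filter.1 hx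
        rw [W₂.mem_ball_iff] at hxz
        rw [W₂.mem_ball_iff] at hx'z
        rw [W₁.mem_ball_iff, dcomm₁]
        have t1 : (W₂.G.dist (φ x) (φ x') : ℝ) ≤
            (W₂.G.dist (φ x) z : ℝ) + (W₂.G.dist z (φ x') : ℝ) := tri₂ _ z _
        rw [dcomm₂ z (φ x')] at t1
        have t2 : (W₂.G.dist (φ x) (φ x') : ℝ) < 2*C₁ := by linarith
        have t3 := (hdist x x').1
        have t4 : (W₁.G.dist x x' : ℝ) - C₁ ≤ C₂ * (W₂.G.dist (φ x) (φ x') : ℝ) := by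
          have h := mul_le_mul_of_nonneg_left t3 hC₂0.le
          rwa [← mul_assoc, mul_inv_cancel₀ (ne_of_gt hC₂0), one_mul] at h
        have t5 := mul_lt_mul_of_pos_left t2 hC₂0
        rw [hDdef]
        linarith
      calc ((S.filter (fun x => z ∈ W₂.ball (φ x) C₁)).card : ℝ)
          ≤ ((W₁.ball x' D).card : ℝ) := by exact_mod_cast Finset.card_le_card hsubF
        _ ≤ N := hcard x'
    have hlow : W₁.vol x₀ l ≤ C₃ * (N * W₂.vol w R) := by
      have h1 : ∀ x ∈ S, W₁.nuV x ≤ C₃ * W₂.vol (φ x) C₁ := by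
        intro x _
        have h2 : W₁.nuV x ≤ W₁.vol x C₁ := W₁.nuV_le_vol hC₁
        have h3 := (hvol x).1
        have h3' : W₁.vol x C₁ ≤ C₃ * W₂.vol (φ x) C₁ := by
          have h := mul_le_mul_of_nonneg_left h3 hC₃0.le
          rwa [← mul_assoc, mul_inv_cancel₀ (ne_of_gt hC₃0), one_mul] at h
        linarith
      have h4 : W₁.vol x₀ l ≤ C₃ * ∑ x ∈ S, W₂.vol (φ x) C₁ := by
        calc W₁.vol x₀ l = ∑ x ∈ S, W₁.nuV x := rfl
          _ ≤ ∑ x ∈ S, C₃ * W₂.vol (φ x) C₁ := Finset.sum_le_sum h1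
          _ = C₃ * ∑ x ∈ S, W₂.vol (φ x) C₁ := by rw [← Finset.mul_sum]
      have h5 : ∑ x ∈ S, W₂.vol (φ x) C₁ ≤ N * ∑ z ∈ T, W₂.nuV z :=
        WeightedGraph.sum_le_mul_biUnion _ _ _ (fun z => W₂.nuV_nonneg z) hmult
      have h6 : ∑ z ∈ T, W₂.nuV z ≤ W₂.vol w R :=
        Finset.sum_le_sum_of_subset_of_nonneg hTsub fun z _ _ => W₂.nuV_nonneg z
      calc W₁.vol x₀ l ≤ C₃ * ∑ x ∈ S, W₂.vol (φ x) C₁ := h4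
        _ ≤ C₃ * (N * ∑ z ∈ T, W₂.nuV z) := mul_le_mul_of_nonneg_left h5 hC₃0.le
        _ ≤ C₃ * (N * W₂.vol w R) :=
            mul_le_mul_of_nonneg_left (mul_le_mul_of_nonneg_left h6 hN0.le) hC₃0.le
    -- combine
    have hfin : W₂.vol w (2*R) ≤ Cb * W₂.vol w R := by
      have e1 : W₂.vol w (2*R) ≤ C₃ * c₁ * W₁.vol x₀ L := hup1.trans hup2
      have e2 : W₁.vol x₀ L ≤ C'^k * (C₃ * (N * W₂.vol w R)) := by
        refine hCiter.trans ?_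
        exact mul_le_mul_of_nonneg_left hlow (by positivity)
      have hcc : (0:ℝ) ≤ C₃ * c₁ := by positivity
      calc W₂.vol w (2*R) ≤ C₃ * c₁ * W₁.vol x₀ L := e1
        _ ≤ C₃ * c₁ * (C'^k * (C₃ * (N * W₂.vol w R))) := mul_le_mul_of_nonneg_left e2 hcc
        _ = Cb * W₂.vol w R := by rw [hCbdef]; ring
    exact hfin.trans
      (mul_le_mul_of_nonneg_right (le_max_right _ _) (W₂.vol_nonneg w R))
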